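/- Let C ⊆ ℝ^{n+1} be a nonempty compact convex set and α ≥ 0. If (0_n, 1) belongs to the closure of the convex conical hull of C + α·B_{n+1} (where B_{n+1} is the closed unit Euclidean ball), then for every ε > 0, (0_n, 1) belongs to the (not necessarily closed) convex conical hull of C + (α + ε)·B_{n+1}. -/

import Mathlib

open Finset Pointwise

noncomputable def enorm' {k : ℕ} (v : Fin k → ℝ) : ℝ := Real.sqrt (∑ i, v i ^ 2)

def coneHull {k : ℕ} (X : Set (Fin k → ℝ)) : Set (Fin k → ℝ) :=
  {y | y = 0 ∨ ∃ t : ℝ, 0 ≤ t ∧ ∃ c ∈ convexHull ℝ X, y = t • c}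

def dualCone {m : ℕ} (K : Set (Fin m → ℝ)) : Set (Fin m → ℝ) :=
  {a | ∀ x ∈ K, 0 ≤ ∑ i, a i * x i}

def Feas {m n : ℕ} (K : Set (Fin m → ℝ)) (Abar : Fin m → Fin n → ℝ) (bbar : Fin m → ℝ)
    (r : Fin m → ℝ) : Set (Fin n → ℝ) :=
  {x | ∀ (a : Fin m → Fin n → ℝ) (b : Fin m → ℝ),
      (∀ i, enorm' (Fin.snoc (a i - Abar i) (b i - bbar i)) ≤ r i) →
      (fun i => (∑ j, a i j * x j) + b i) ∈ -K}

def Adm {m n : ℕ} (K : Set (Fin m → ℝ)) (Abar : Fin m → Fin n → ℝ) (bbar : Fin m → ℝ) :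
    Set (Fin m → ℝ) :=
  {r | (∀ i, 0 ≤ r i) ∧ (Feas K Abar bbar r).Nonempty}

noncomputable def rrf {m n : ℕ} (K : Set (Fin m → ℝ)) (Abar : Fin m → Fin n → ℝ)
    (bbar : Fin m → ℝ) : ℝ :=
  sSup {α : ℝ | 0 ≤ α ∧ (fun _ => α) ∈ Adm K Abar bbar}

def Epi {m n : ℕ} (Abar : Fin m → Fin n → ℝ) (bbar : Fin m → ℝ) (B : Set (Fin m → ℝ)) :
    Set (Fin (n + 1) → ℝ) :=
  {y | ∃ l ∈ B, ∃ w : ℝ, 0 ≤ w ∧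
    y = Fin.snoc (fun j => ∑ i, l i * Abar i j) (-(∑ i, l i * bbar i) + w)}

noncomputable def edist0 {m n : ℕ} (Abar : Fin m → Fin n → ℝ) (bbar : Fin m → ℝ)
    (B : Set (Fin m → ℝ)) : ℝ :=
  sInf {t : ℝ | ∃ y ∈ Epi Abar bbar B, t = enorm' y}

def IsCompactBase {m : ℕ} (C B : Set (Fin m → ℝ)) : Prop :=
  IsCompact B ∧ Convex ℝ B ∧ B ⊆ C ∧ (0 : Fin m → ℝ) ∉ B ∧
    C = {y | ∃ t : ℝ, 0 ≤ t ∧ ∃ b ∈ B, y = t • b}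

def IsClosedConvexCone {m : ℕ} (K : Set (Fin m → ℝ)) : Prop :=
  IsClosed K ∧ Convex ℝ K ∧ ∀ t : ℝ, 0 ≤ t → ∀ x ∈ K, t • x ∈ K

noncomputable def c1 {m : ℕ} (n : ℕ) (B : Set (Fin m → ℝ)) : ℝ :=
  (sSup {t : ℝ | ∃ l ∈ B, ∃ u : Fin m → (Fin (n + 1) → ℝ),
    (∀ i, enorm' (u i) ≤ 1) ∧ t = enorm' (∑ i, l i • u i)})⁻¹

noncomputable def c2 {m : ℕ} (B : Set (Fin m → ℝ)) : ℝ :=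
  (sInf {t : ℝ | ∃ l ∈ B, t = ∑ i, |l i|})⁻¹
lemma enorm'_eq_norm {k : ℕ} (v : Fin k → ℝ) :
    enorm' v = ‖(WithLp.equiv 2 (Fin k → ℝ)).symm v‖ := by
  rw [EuclideanSpace.norm_eq]
  simp [enorm', sq_abs]

lemma enorm'_nonneg {k : ℕ} (v : Fin k → ℝ) : 0 ≤ enorm' v := Real.sqrt_nonneg _

lemma enorm'_zero {k : ℕ} : enorm' (0 : Fin k → ℝ) = 0 := by simp [enorm']

lemma enorm'_add_le {k : ℕ} (a b : Fin k → ℝ) : enorm' (a + b) ≤ enorm' a + enorm' b := by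
  simp only [enorm'_eq_norm]
  exact norm_add_le _ _

lemma enorm'_smul {k : ℕ} (t : ℝ) (v : Fin k → ℝ) : enorm' (t • v) = |t| * enorm' v := by
  simp only [enorm'_eq_norm]
  rw [show (WithLp.equiv 2 (Fin k → ℝ)).symm (t • v) = t • (WithLp.equiv 2 (Fin k → ℝ)).symm v from rfl]
  rw [norm_smul]; simp

lemma enorm'_continuous {k : ℕ} : Continuous fun v : Fin k → ℝ => enorm' v := by
  unfold enorm'
  exact Real.continuous_sqrt.comp (continuous_finset_sum _ fun i _ => (continuous_apply i).pow 2)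

lemma enorm'_single {n : ℕ} : enorm' (Pi.single (Fin.last n) 1 : Fin (n+1) → ℝ) = 1 := by
  unfold enorm'
  rw [Finset.sum_eq_single (Fin.last n)] <;> simp [Pi.single_apply]

lemma ball_convex {k : ℕ} : Convex ℝ {b : Fin k → ℝ | enorm' b ≤ 1} := by
  intro x hx y hy a b ha hb hab
  calc enorm' (a • x + b • y) ≤ enorm' (a • x) + enorm' (b • y) := enorm'_add_le _ _
    _ = |a| * enorm' x + |b| * enorm' y := by rw [enorm'_smul, enorm'_smul]
    _ ≤ a * 1 + b * 1 := by
        rw [abs_of_nonneg ha, abs_of_nonneg hb]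
        gcongr <;> [exact hx; exact hy]
    _ = 1 := by linarith


/-- extended accessibility lemma for conic hulls of enlarged compact convex sets. -/
theorem statement0 {n : ℕ} (C : Set (Fin (n + 1) → ℝ)) (hne : C.Nonempty)
    (hcpt : IsCompact C) (hconv : Convex ℝ C) (α : ℝ) (hα : 0 ≤ α)
    (h : (Pi.single (Fin.last n) 1 : Fin (n + 1) → ℝ) ∈
      closure (coneHull (C + α • {b : Fin (n + 1) → ℝ | enorm' b ≤ 1}))) :
    ∀ ε > (0 : ℝ),
      (Pi.single (Fin.last n) 1 : Fin (n + 1) → ℝ) ∈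
        coneHull (C + (α + ε) • {b : Fin (n + 1) → ℝ | enorm' b ≤ 1}) := by
  intro ε hε
  set e : Fin (n+1) → ℝ := Pi.single (Fin.last n) 1 with he
  have hEe : enorm' e = 1 := enorm'_single
  -- bound on C
  obtain ⟨c₀, hc₀C, hc₀'⟩ := hcpt.exists_isMaxOn hne enorm'_continuous.continuousOn
  have hc₀ : ∀ x ∈ C, enorm' x ≤ enorm' c₀ := fun x hx => hc₀' hx
  set R := enorm' c₀ with hRdef
  have hR : 0 ≤ R := enorm'_nonneg _
  set M := R + α + 1 with hMdef
  have hM0 : 0 < M := by positivity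
  set η := min (1/2 : ℝ) (ε / (2*M)) with hηdef
  have hη0 : 0 < η := lt_min (by norm_num) (by positivity)
  have hηhalf : η ≤ 1/2 := min_le_left _ _
  have hηeps : η ≤ ε / (2*M) := min_le_right _ _
  -- D is convex
  have hD : Convex ℝ (C + α • {b : Fin (n + 1) → ℝ | enorm' b ≤ 1}) :=
    hconv.add (ball_convex.smul α)
  -- find y close to e
  have hyex : ∃ y ∈ coneHull (C + α • {b : Fin (n + 1) → ℝ | enorm' b ≤ 1}),
      enorm' (e - y) < η := by
    have ho : IsOpen {y : Fin (n+1) → ℝ | enorm' (e - y) < η} :=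
      isOpen_lt (enorm'_continuous.comp (continuous_const.sub continuous_id)) continuous_const
    have heo : e ∈ {y : Fin (n+1) → ℝ | enorm' (e - y) < η} := by
      simp [sub_self, enorm'_zero, hη0]
    obtain ⟨y, hy1, hy2⟩ := mem_closure_iff.mp h _ ho heo
    exact ⟨y, hy2, hy1⟩
  obtain ⟨y, hy, hclose⟩ := hyex
  rcases hy with rfl | ⟨t, ht, c, hc, rfl⟩
  · exfalso; rw [sub_zero, hEe] at hclose; linarith
  rw [hD.convexHull_eq] at hc
  obtain ⟨p, hp, q, hq, hpq⟩ := Set.mem_add.mp hc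
  obtain ⟨b, hb, rfl⟩ := Set.mem_smul_set.mp hq
  -- bound enorm' c ≤ M
  have hcM : enorm' c ≤ M := by
    rw [← hpq]
    calc enorm' (p + α • b) ≤ enorm' p + enorm' (α • b) := enorm'_add_le _ _
      _ = enorm' p + |α| * enorm' b := by rw [enorm'_smul]
      _ ≤ R + α * 1 := by
          rw [abs_of_nonneg hα]
          gcongr
          · exact hc₀ p hp
          · exact hb
      _ ≤ M := by rw [hMdef]; linarith
  -- t is not 0
  have htpos : 0 < t := by
    rcases ht.lt_or_eq with h' | h'
    · exact h'
    · exfalso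
      rw [← h', zero_smul, sub_zero, hEe] at hclose; linarith
  -- enorm' y ≥ 1 - η
  have hylb : 1 - η ≤ enorm' (t • c) := by
    have := enorm'_add_le (e - t • c) (t • c)
    simp only [sub_add_cancel] at this
    rw [hEe] at this
    linarith
  have htlb : 1/2 ≤ t * M := by
    have : enorm' (t • c) = t * enorm' c := by rw [enorm'_smul, abs_of_nonneg ht]
    nlinarith [enorm'_nonneg c]
  have htinv : t⁻¹ ≤ 2 * M := by
    rw [inv_le_iff_one_le_mul₀ htpos]
    nlinarith
  set w := e - t • c with hw
  set b' := (α + ε)⁻¹ • (α • b + t⁻¹ • w) with hb'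
  have hαε : (0:ℝ) < α + ε := by linarith
  have hb'mem : enorm' b' ≤ 1 := by
    rw [hb', enorm'_smul, abs_of_nonneg (inv_nonneg.mpr hαε.le)]
    rw [inv_mul_le_iff₀ hαε, mul_one]
    calc enorm' (α • b + t⁻¹ • w) ≤ enorm' (α • b) + enorm' (t⁻¹ • w) := enorm'_add_le _ _
      _ = |α| * enorm' b + |t⁻¹| * enorm' w := by rw [enorm'_smul, enorm'_smul]
      _ ≤ α * 1 + 2 * M * (ε / (2 * M)) := by
          rw [abs_of_nonneg hα, abs_of_nonneg (inv_nonneg.mpr htpos.le)]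
          gcongr
          · exact hb
          · exact enorm'_nonneg _
          · exact le_of_lt (lt_of_lt_of_le hclose hηeps)
      _ = α + ε := by field_simp
  refine Or.inr ⟨t, ht, p + (α + ε) • b', ?_, ?_⟩
  · exact subset_convexHull ℝ _ (Set.add_mem_add hp (Set.smul_mem_smul_set hb'mem))
  · have h1 : (α + ε) • b' = α • b + t⁻¹ • w := smul_inv_smul₀ (ne_of_gt hαε) _
    rw [smul_add, h1, smul_add, smul_smul t t⁻¹, mul_inv_cancel₀ (ne_of_gt htpos), one_smul,
      hw, ← hpq, smul_add]
    abel
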